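/- Let S and A be finite nonempty types, P : S → A → PMF S a transition kernel, π : S → PMF A a policy, γ a real with 0 ≤ γ < 1, and δ ≥ 0. Let r̂, r* : S → A → ℝ be reward functions with |r̂(s,a) − r*(s,a)| ≤ δ for all s, a. Suppose Q_ψ, Q_* : S → A → ℝ satisfy the Bellman equations Q_ψ(s,a) = r̂(s,a) + γ·Σ_{s'} P(s,a)(s')·Σ_{a'} π(s')(a')·Q_ψ(s',a') and Q_*(s,a) = r*(s,a) + γ·Σ_{s'} P(s,a)(s')·Σ_{a'} π(s')(a')·Q_*(s',a') for all s, a. Then |Q_ψ(s,a) − Q_*(s,a)| ≤ δ/(1−γ) for all s, a. -/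

import Mathlib

open Finset

lemma pmf_sum_toReal_eq_one {α : Type*} [Fintype α] (p : PMF α) :
    ∑ x : α, (p x).toReal = 1 := by
  rw [← ENNReal.toReal_sum (fun x _ => PMF.apply_ne_top p x), ← tsum_fintype (L := .unconditional _),
    p.tsum_coe, ENNReal.toReal_one]

/-- If two Q-functions satisfy the Bellman equations for the same dynamics and
policy but reward functions that differ pointwise by at most `δ`, then they
differ pointwise by at most `δ / (1 - γ)`. -/
theorem q_function_error_upper_bound
    {S A : Type*} [Fintype S] [Fintype A] [Nonempty S] [Nonempty A]
    (P : S → A → PMF S) (π : S → PMF A) (γ : ℝ) (hγ0 : 0 ≤ γ) (hγ1 : γ < 1)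
    (δ : ℝ) (hδ : 0 ≤ δ)
    (rhat rstar : S → A → ℝ)
    (hr : ∀ s a, |rhat s a - rstar s a| ≤ δ)
    (Qψ Qstar : S → A → ℝ)
    (hQψ : ∀ s a, Qψ s a = rhat s a +
      γ * ∑ s' : S, (P s a s').toReal * ∑ a' : A, (π s' a').toReal * Qψ s' a')
    (hQstar : ∀ s a, Qstar s a = rstar s a +
      γ * ∑ s' : S, (P s a s').toReal * ∑ a' : A, (π s' a').toReal * Qstar s' a') :
    ∀ s a, |Qψ s a - Qstar s a| ≤ δ / (1 - γ) := by
  set D : S → A → ℝ := fun s a => Qψ s a - Qstar s a with hD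
  obtain ⟨p, -, hp⟩ := Finset.exists_max_image (univ : Finset (S × A))
    (fun q => |D q.1 q.2|) ⟨(Classical.arbitrary S, Classical.arbitrary A), mem_univ _⟩
  set M := |D p.1 p.2| with hM
  have hMax : ∀ s a, |D s a| ≤ M := fun s a => hp (s, a) (mem_univ _)
  have hM0 : 0 ≤ M := abs_nonneg _
  -- pointwise inner bound
  have inner : ∀ s' : S, |∑ a' : A, (π s' a').toReal * D s' a'| ≤ M := by
    intro s'
    calc |∑ a' : A, (π s' a').toReal * D s' a'|
        ≤ ∑ a' : A, |(π s' a').toReal * D s' a'| := Finset.abs_sum_le_sum_abs _ _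
      _ ≤ ∑ a' : A, (π s' a').toReal * M := by
          refine Finset.sum_le_sum fun a' _ => ?_
          rw [abs_mul, abs_of_nonneg ENNReal.toReal_nonneg]
          exact mul_le_mul_of_nonneg_left (hMax s' a') ENNReal.toReal_nonneg
      _ = M := by rw [← Finset.sum_mul, pmf_sum_toReal_eq_one, one_mul]
  have key : ∀ s a, |D s a| ≤ δ + γ * M := by
    intro s a
    have hDsa : D s a = (rhat s a - rstar s a) +
        γ * ∑ s' : S, (P s a s').toReal *
          (∑ a' : A, (π s' a').toReal * Qψ s' a'
            - ∑ a' : A, (π s' a').toReal * Qstar s' a') := by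
      simp only [hD, hQψ s a, hQstar s a, mul_sub, Finset.sum_sub_distrib]
      ring
    have hsum : |∑ s' : S, (P s a s').toReal *
        (∑ a' : A, (π s' a').toReal * Qψ s' a'
          - ∑ a' : A, (π s' a').toReal * Qstar s' a')| ≤ M := by
      calc _ ≤ ∑ s' : S, |(P s a s').toReal *
            (∑ a' : A, (π s' a').toReal * Qψ s' a'
              - ∑ a' : A, (π s' a').toReal * Qstar s' a')| :=
            Finset.abs_sum_le_sum_abs _ _
        _ ≤ ∑ s' : S, (P s a s').toReal * M := by
            refine Finset.sum_le_sum fun s' _ => ?_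
            rw [abs_mul, abs_of_nonneg ENNReal.toReal_nonneg]
            refine mul_le_mul_of_nonneg_left ?_ ENNReal.toReal_nonneg
            have : (∑ a' : A, (π s' a').toReal * Qψ s' a'
                - ∑ a' : A, (π s' a').toReal * Qstar s' a')
                = ∑ a' : A, (π s' a').toReal * D s' a' := by
              rw [← Finset.sum_sub_distrib]
              congr 1; ext a'; simp [hD]; ring
            rw [this]; exact inner s'
        _ = M := by rw [← Finset.sum_mul, pmf_sum_toReal_eq_one, one_mul]
    calc |D s a| ≤ |rhat s a - rstar s a| + |γ * _| := hDsa ▸ abs_add_le _ _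
      _ ≤ δ + γ * M := by
          refine add_le_add (hr s a) ?_
          rw [abs_mul, abs_of_nonneg hγ0]
          exact mul_le_mul_of_nonneg_left hsum hγ0
  have hMle : M ≤ δ / (1 - γ) := by
    have h := key p.1 p.2
    rw [← hM] at h
    have h1γ : 0 < 1 - γ := by linarith
    rw [le_div_iff₀ h1γ]
    nlinarith
  intro s a
  exact (hMax s a).trans hMle
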